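/- arXiv:1703.04946 — 4 statements merged into one kernel-verified Lean document; each statement's English description precedes it below -/
import Mathlib

section
/- For every natural number n, the limit as x → ∞ of iⁿerfc(−x)/xⁿ equals 2/n!. -/
open MeasureTheory Filter

open Topology in
private lemma ierfc_aux_integrable_pow_gauss (k : ℕ) :
    Integrable (fun t : ℝ => t ^ k * Real.exp (-t ^ 2)) := by
  have h := integrable_rpow_mul_exp_neg_mul_sq (b := 1) one_pos (s := (k : ℝ))
    (neg_one_lt_zero.trans_le (Nat.cast_nonneg k))
  simp_rw [Real.rpow_natCast, neg_one_mul] at h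
  exact h

private lemma ierfc_aux_integrable_sub_pow_gauss (x : ℝ) (m : ℕ) :
    Integrable (fun t : ℝ => (t - x) ^ m * Real.exp (-t ^ 2)) := by
  have h : ∀ t : ℝ, (t - x) ^ m * Real.exp (-t ^ 2)
      = ∑ k ∈ Finset.range (m + 1),
          ((-x) ^ (m - k) * (m.choose k : ℝ)) * (t ^ k * Real.exp (-t ^ 2)) := by
    intro t
    rw [sub_eq_add_neg, add_pow, Finset.sum_mul]
    exact Finset.sum_congr rfl fun k _ => by ring
  have h2 : Integrable (fun t : ℝ => ∑ k ∈ Finset.range (m + 1),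
      ((-x) ^ (m - k) * (m.choose k : ℝ)) * (t ^ k * Real.exp (-t ^ 2))) :=
    integrable_finset_sum _ fun k _ => (ierfc_aux_integrable_pow_gauss k).const_mul _
  exact h2.congr (Filter.Eventually.of_forall fun t => (h t).symm)

open Topology in
private lemma ierfc_aux_tendsto_setIntegral_Ioi_neg (f : ℝ → ℝ) (hf : Integrable f) :
    Tendsto (fun x : ℝ => ∫ t in Set.Ioi (-x), f t) atTop (𝓝 (∫ t, f t)) := by
  have he : ∀ x : ℝ, ∫ t in Set.Ioi (-x), f t = ∫ t, (Set.Ioi (-x)).indicator f t :=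
    fun x => (integral_indicator measurableSet_Ioi).symm
  simp_rw [he]
  refine tendsto_integral_filter_of_dominated_convergence (fun t => ‖f t‖)
    (Eventually.of_forall fun x => hf.aestronglyMeasurable.indicator measurableSet_Ioi)
    (Eventually.of_forall fun x => Eventually.of_forall fun t =>
      norm_indicator_le_norm_self f t) hf.norm ?_
  refine Eventually.of_forall fun t => ?_
  refine tendsto_const_nhds.congr' ?_
  filter_upwards [eventually_gt_atTop (-t)] with x hx
  rw [Set.indicator_of_mem (by simpa [Set.mem_Ioi] using neg_lt.mpr hx)]

/-- The `n`-th iterated integral of the complementary error function: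
`ierfc 0 x = erfc x = (2/√π) ∫ₓ^∞ exp(-t²) dt` and
`ierfc (n+1) x = ∫ₓ^∞ ierfc n t dt`. -/
noncomputable def ierfc : ℕ → ℝ → ℝ
  | 0, x => (2 / Real.sqrt Real.pi) * ∫ t in Set.Ioi x, Real.exp (-t ^ 2)
  | n + 1, x => ∫ t in Set.Ioi x, ierfc n t

/-- Closed form: `ierfc n x = (2/√π) / n! * ∫ₓ^∞ (t - x)^n exp (-t²) dt`. -/
private lemma ierfc_aux_eq (n : ℕ) (x : ℝ) :
    ierfc n x = (2 / Real.sqrt Real.pi) * (1 / (n.factorial : ℝ)) *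
      ∫ t in Set.Ioi x, (t - x) ^ n * Real.exp (-t ^ 2) := by
  induction n generalizing x with
  | zero => simp [ierfc]
  | succ n ih =>
    have hgc : Continuous (fun p : ℝ × ℝ => (p.2 - p.1) ^ n * Real.exp (-p.2 ^ 2)) := by
      fun_prop
    set S : Set (ℝ × ℝ) := {p : ℝ × ℝ | x < p.1 ∧ p.1 < p.2} with hSdef
    have hSm : MeasurableSet S :=
      (measurableSet_lt measurable_const measurable_fst).inter
        (measurableSet_lt measurable_fst measurable_snd)
    set F : ℝ → ℝ → ℝ :=
      fun y t => S.indicator (fun p : ℝ × ℝ => (p.2 - p.1) ^ n * Real.exp (-p.2 ^ 2)) (y, t)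
      with hFdef
    have hslice : ∀ t : ℝ, (fun y => F y t)
        = (Set.Ioo x t).indicator (fun y => (t - y) ^ n * Real.exp (-t ^ 2)) := by
      intro t; funext y
      simp only [hFdef, hSdef, Set.indicator_apply, Set.mem_Ioo, Set.mem_setOf_eq]
    have hinner : ∀ t : ℝ, (∫ y, F y t)
        = (Set.Ioi x).indicator
            (fun t => (t - x) ^ (n + 1) / (n + 1) * Real.exp (-t ^ 2)) t := by
      intro t
      rw [hslice t, integral_indicator measurableSet_Ioo]
      by_cases hxt : x < t
      · rw [Set.indicator_of_mem (Set.mem_Ioi.mpr hxt),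
          ← integral_Ioc_eq_integral_Ioo, ← intervalIntegral.integral_of_le hxt.le,
          intervalIntegral.integral_mul_const,
          intervalIntegral.integral_comp_sub_left (fun y => y ^ n) t,
          sub_self, integral_pow]
        simp
      · rw [Set.indicator_of_notMem (by simpa using hxt), Set.Ioo_eq_empty hxt]
        simp
    have hsliceInt : ∀ t : ℝ, Integrable (fun y => F y t) := by
      intro t
      rw [hslice t]
      exact (((hgc.comp (by fun_prop : Continuous (fun y : ℝ => (y, t)))).integrableOn_Icc
        ).mono_set Set.Ioo_subset_Icc_self).integrable_indicator measurableSet_Ioo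
    have hFnn : ∀ y t : ℝ, 0 ≤ F y t := by
      intro y t
      refine Set.indicator_nonneg (fun p hp => ?_) _
      exact mul_nonneg (pow_nonneg (sub_nonneg.mpr hp.2.le) n) (Real.exp_pos _).le
    have hFi : Integrable (Function.uncurry F) ((volume : Measure ℝ).prod volume) := by
      have hmeas : AEStronglyMeasurable (Function.uncurry F) (volume.prod volume) := by
        have he : Function.uncurry F
            = S.indicator (fun p : ℝ × ℝ => (p.2 - p.1) ^ n * Real.exp (-p.2 ^ 2)) := by
          funext p; cases p; rfl
        rw [he]
        exact (hgc.measurable.indicator hSm).aestronglyMeasurable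
      rw [integrable_prod_iff' hmeas]
      constructor
      · exact Eventually.of_forall fun t => hsliceInt t
      · have he2 : (fun t => ∫ y, ‖Function.uncurry F (y, t)‖)
            = (Set.Ioi x).indicator
                (fun t => (t - x) ^ (n + 1) / (n + 1) * Real.exp (-t ^ 2)) := by
          funext t
          have : ∀ y, ‖Function.uncurry F (y, t)‖ = F y t := fun y =>
            Real.norm_of_nonneg (hFnn y t)
          simp_rw [this]
          exact hinner t
        rw [he2]
        exact (((ierfc_aux_integrable_sub_pow_gauss x (n + 1)).div_const ((n : ℝ) + 1)).congr
          (Eventually.of_forall fun t => by push_cast; ring)).indicator measurableSet_Ioi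
    have hswap := integral_integral_swap (f := F) hFi
    have houter : ∀ y : ℝ, (∫ t, F y t)
        = (Set.Ioi x).indicator
            (fun y => ∫ t in Set.Ioi y, (t - y) ^ n * Real.exp (-t ^ 2)) y := by
      intro y
      by_cases hy : x < y
      · rw [Set.indicator_of_mem (Set.mem_Ioi.mpr hy)]
        have he : (fun t => F y t)
            = (Set.Ioi y).indicator (fun t => (t - y) ^ n * Real.exp (-t ^ 2)) := by
          funext t
          simp only [hFdef, hSdef, Set.indicator_apply, Set.mem_Ioi, Set.mem_setOf_eq, hy,
            true_and]
        rw [he, integral_indicator measurableSet_Ioi]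
      · rw [Set.indicator_of_notMem (by simpa using hy)]
        have he : (fun t => F y t) = fun _ => (0 : ℝ) := by
          funext t
          simp only [hFdef, hSdef, Set.indicator_apply, Set.mem_setOf_eq]
          rw [if_neg (fun h => hy h.1)]
        rw [he, integral_zero]
    have step1 : ierfc (n + 1) x = ∫ y in Set.Ioi x, ierfc n y := rfl
    have step2 : (∫ y in Set.Ioi x, ierfc n y)
        = (2 / Real.sqrt Real.pi) * (1 / (n.factorial : ℝ)) *
            ∫ y in Set.Ioi x, ∫ t in Set.Ioi y, (t - y) ^ n * Real.exp (-t ^ 2) := by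
      rw [← integral_const_mul]
      exact setIntegral_congr_fun measurableSet_Ioi fun y _ => ih y
    have step3 : (∫ y in Set.Ioi x, ∫ t in Set.Ioi y, (t - y) ^ n * Real.exp (-t ^ 2))
        = (∫ t in Set.Ioi x, (t - x) ^ (n + 1) * Real.exp (-t ^ 2)) / ((n : ℝ) + 1) := by
      rw [← integral_indicator measurableSet_Ioi]
      simp_rw [← houter]
      rw [hswap]
      simp_rw [hinner]
      rw [integral_indicator measurableSet_Ioi, ← integral_div]
      exact setIntegral_congr_fun measurableSet_Ioi fun t _ => by ring
    rw [step1, step2, step3]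
    have hn : (n.factorial : ℝ) ≠ 0 := Nat.cast_ne_zero.mpr n.factorial_ne_zero
    have hn1 : ((n : ℝ) + 1) ≠ 0 := by positivity
    rw [Nat.factorial_succ]
    have hπ : Real.sqrt Real.pi ≠ 0 := ne_of_gt (Real.sqrt_pos.mpr Real.pi_pos)
    push_cast
    field_simp

open Topology in
/-- `lim_{x → ∞} ierfc n (-x) / x^n = 2 / n!`. -/
theorem ierfc_neg_div_pow_tendsto (n : ℕ) :
    Tendsto (fun x : ℝ => ierfc n (-x) / x ^ n) atTop
      (nhds (2 / (Nat.factorial n : ℝ))) := by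
  have hπ : Real.sqrt Real.pi ≠ 0 := ne_of_gt (Real.sqrt_pos.mpr Real.pi_pos)
  -- the limit of each binomial term
  have hterm : ∀ k : ℕ,
      Tendsto (fun x : ℝ => (∫ t in Set.Ioi (-x), t ^ k * Real.exp (-t ^ 2)) / x ^ k) atTop
        (𝓝 (if k = 0 then Real.sqrt Real.pi else 0)) := by
    intro k
    rcases eq_or_ne k 0 with hk | hk
    · subst hk
      simp only [if_pos rfl, pow_zero, div_one]
      have h0 := ierfc_aux_tendsto_setIntegral_Ioi_neg _ (ierfc_aux_integrable_pow_gauss 0)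
      have hval : (∫ t : ℝ, t ^ 0 * Real.exp (-t ^ 2)) = Real.sqrt Real.pi := by
        have h1 := integral_gaussian (1 : ℝ)
        simp only [neg_one_mul, Real.sqrt_one, div_one] at h1
        simpa using h1
      rw [hval] at h0
      simpa using h0
    · rw [if_neg hk]
      have hCk := (ierfc_aux_integrable_pow_gauss k).norm
      refine squeeze_zero_norm' ?_
        (Tendsto.div_atTop
          (tendsto_const_nhds (x := ∫ t : ℝ, ‖t ^ k * Real.exp (-t ^ 2)‖))
          (tendsto_pow_atTop hk))
      filter_upwards [eventually_gt_atTop 0] with x hx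
      rw [norm_div, norm_pow, Real.norm_eq_abs x, abs_of_pos hx]
      gcongr
      calc ‖∫ t in Set.Ioi (-x), t ^ k * Real.exp (-t ^ 2)‖
          ≤ ∫ t in Set.Ioi (-x), ‖t ^ k * Real.exp (-t ^ 2)‖ :=
            norm_integral_le_integral_norm _
        _ ≤ ∫ t : ℝ, ‖t ^ k * Real.exp (-t ^ 2)‖ :=
            setIntegral_le_integral hCk (ae_of_all _ fun t => norm_nonneg _)
  -- the limit of the sum
  have hsum : Tendsto (fun x : ℝ => ∑ k ∈ Finset.range (n + 1),
      (n.choose k : ℝ) * ((∫ t in Set.Ioi (-x), t ^ k * Real.exp (-t ^ 2)) / x ^ k)) atTop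
      (𝓝 (Real.sqrt Real.pi)) := by
    have h := tendsto_finset_sum (Finset.range (n + 1))
      (fun k _ => (hterm k).const_mul (n.choose k : ℝ))
    have hv : ∑ k ∈ Finset.range (n + 1),
        (n.choose k : ℝ) * (if k = 0 then Real.sqrt Real.pi else 0) = Real.sqrt Real.pi := by
      rw [Finset.sum_eq_single 0]
      · simp
      · intro k _ hk; simp [hk]
      · intro h0; exact absurd (Finset.mem_range.mpr n.succ_pos) h0
    rwa [hv] at h
  -- eventual equality of the two expressions
  have hkey : ∀ᶠ x : ℝ in atTop, ierfc n (-x) / x ^ n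
      = (2 / Real.sqrt Real.pi) * (1 / (n.factorial : ℝ)) *
          ∑ k ∈ Finset.range (n + 1),
            (n.choose k : ℝ) * ((∫ t in Set.Ioi (-x), t ^ k * Real.exp (-t ^ 2)) / x ^ k) := by
    filter_upwards [eventually_gt_atTop 0] with x hx
    rw [ierfc_aux_eq]
    have hbin : (∫ t in Set.Ioi (-x), (t - -x) ^ n * Real.exp (-t ^ 2))
        = ∑ k ∈ Finset.range (n + 1),
            ((n.choose k : ℝ) * x ^ (n - k)) * ∫ t in Set.Ioi (-x), t ^ k * Real.exp (-t ^ 2) := by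
      have hexp : ∀ t : ℝ, (t - -x) ^ n * Real.exp (-t ^ 2)
          = ∑ k ∈ Finset.range (n + 1),
              ((n.choose k : ℝ) * x ^ (n - k)) * (t ^ k * Real.exp (-t ^ 2)) := by
        intro t
        rw [sub_neg_eq_add, add_pow, Finset.sum_mul]
        exact Finset.sum_congr rfl fun k _ => by ring
      simp_rw [hexp]
      rw [integral_finset_sum _
        (fun k _ => ((ierfc_aux_integrable_pow_gauss k).const_mul _).integrableOn)]
      exact Finset.sum_congr rfl fun k _ => integral_const_mul _ _
    rw [hbin, mul_div_assoc, Finset.sum_div]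
    congr 1
    refine Finset.sum_congr rfl fun k hk => ?_
    have hkn : k ≤ n := Nat.lt_succ_iff.mp (Finset.mem_range.mp hk)
    have hxk : x ^ k ≠ 0 := by positivity
    have hxn : x ^ n ≠ 0 := by positivity
    have hxnk : x ^ (n - k) * x ^ k = x ^ n := by rw [← pow_add, Nat.sub_add_cancel hkn]
    field_simp
    rw [← hxnk]; ring
  -- conclude
  have hT := hsum.const_mul ((2 / Real.sqrt Real.pi) * (1 / (n.factorial : ℝ)))
  have hval : (2 / Real.sqrt Real.pi) * (1 / (n.factorial : ℝ)) * Real.sqrt Real.pi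
      = 2 / (n.factorial : ℝ) := by
    field_simp
  rw [hval] at hT
  exact Tendsto.congr' (EventuallyEq.symm hkey) hT
end

section
/- For every natural number n, iⁿerfc 0 = 1/(2ⁿ · Γ(n/2 + 1)). -/
open MeasureTheory Filter

open Set Real Nat

lemma gauss_aux : Integrable (fun t : ℝ => rexp (t - t ^ 2)) := by
  have h : ∀ t : ℝ, rexp (t - t ^ 2) = rexp (1/4) * rexp (-1 * (t - 1/2) ^ 2) := by
    intro t; rw [← Real.exp_add]; ring_nf
  simp only [h]
  exact ((integrable_exp_neg_mul_sq one_pos).comp_sub_right (1/2)).const_mul _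

lemma pow_mul_exp_le (n : ℕ) (x t : ℝ) (hx : x < t) :
    (t - x) ^ n * rexp (-t ^ 2) ≤ (n ! * rexp (-x)) * rexp (t - t ^ 2) := by
  have hfac : (0:ℝ) < n ! := by positivity
  have h1 : (t - x) ^ n ≤ n ! * rexp (t - x) := by
    have h := Real.pow_div_factorial_le_exp (x := t - x) (by linarith) n
    calc (t - x) ^ n = ((t - x) ^ n / n !) * n ! := by field_simp
      _ ≤ rexp (t - x) * n ! := mul_le_mul_of_nonneg_right h hfac.le
      _ = n ! * rexp (t - x) := mul_comm _ _
  calc (t - x) ^ n * rexp (-t ^ 2) ≤ (n ! * rexp (t - x)) * rexp (-t ^ 2) :=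
        mul_le_mul_of_nonneg_right h1 (exp_pos _).le
    _ = (n ! * rexp (-x)) * rexp (t - t ^ 2) := by
        rw [mul_assoc, ← Real.exp_add, mul_assoc, ← Real.exp_add]
        congr 2
        ring

lemma integrableOn_aux (n : ℕ) (x : ℝ) :
    IntegrableOn (fun t => (t - x) ^ n * rexp (-t ^ 2)) (Ioi x) := by
  refine Integrable.mono ((gauss_aux.const_mul (n ! * rexp (-x))).integrableOn) ?_ ?_
  · exact (Continuous.mul (by continuity) (by continuity)).aestronglyMeasurable
  · filter_upwards [ae_restrict_mem measurableSet_Ioi] with t ht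
    have h1 : (0:ℝ) ≤ t - x := by simp only [mem_Ioi] at ht; linarith
    rw [Real.norm_eq_abs, Real.norm_eq_abs, abs_of_nonneg (by positivity),
      abs_of_nonneg (by positivity)]
    exact pow_mul_exp_le n x t (by simpa using ht)

lemma inner_le (n : ℕ) (t : ℝ) :
    ∫ s in Ioi t, (s - t) ^ n * rexp (-s ^ 2)
      ≤ (n ! * (∫ s : ℝ, rexp (s - s ^ 2))) * rexp (-t) := by
  calc ∫ s in Ioi t, (s - t) ^ n * rexp (-s ^ 2)
      ≤ ∫ s in Ioi t, (n ! * rexp (-t)) * rexp (s - s ^ 2) := by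
        refine setIntegral_mono_on (integrableOn_aux n t)
          ((gauss_aux.const_mul _).integrableOn) measurableSet_Ioi fun s hs => ?_
        exact pow_mul_exp_le n t s hs
    _ = (n ! * rexp (-t)) * ∫ s in Ioi t, rexp (s - s ^ 2) := integral_const_mul _ _
    _ ≤ (n ! * rexp (-t)) * ∫ s : ℝ, rexp (s - s ^ 2) :=
        mul_le_mul_of_nonneg_left (setIntegral_le_integral gauss_aux
          (Eventually.of_forall fun s => (exp_pos _).le)) (by positivity)
    _ = _ := by ring

lemma swap_lemma (n : ℕ) (x : ℝ) :
    ∫ t in Ioi x, ∫ s in Ioi t, (s - t) ^ n * rexp (-s ^ 2)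
      = ∫ s in Ioi x, (s - x) ^ (n + 1) / (n + 1 : ℝ) * rexp (-s ^ 2) := by
  set f : ℝ → ℝ → ℝ :=
    fun t s => Set.indicator (Ioi t) (fun s => (s - t) ^ n * rexp (-s ^ 2)) s with hf
  have hval : ∀ t s, t < s → f t s = (s - t) ^ n * rexp (-s ^ 2) := by
    intro t s h; rw [hf]; exact Set.indicator_of_mem h _
  have hmeas : AEStronglyMeasurable (Function.uncurry f)
      ((volume.restrict (Ioi x)).prod volume) := by
    have heq : Function.uncurry f = Set.indicator {p : ℝ × ℝ | p.1 < p.2}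
        (fun p => (p.2 - p.1) ^ n * rexp (-p.2 ^ 2)) := by
      ext ⟨t, s⟩
      by_cases h : t < s
      · rw [Function.uncurry, hf]
        simp [Set.indicator_of_mem, h, Set.mem_Ioi]
      · rw [Function.uncurry, hf]
        simp [Set.indicator_of_notMem, h, Set.mem_Ioi]
    rw [heq]
    exact ((Continuous.stronglyMeasurable (by continuity)).indicator
      (measurableSet_lt measurable_fst measurable_snd)).aestronglyMeasurable
  have hnorm : ∀ t, (∫ s, ‖f t s‖) = ∫ s in Ioi t, (s - t) ^ n * rexp (-s ^ 2) := by
    intro t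
    rw [← integral_indicator measurableSet_Ioi]
    congr 1; ext s
    by_cases h : s ∈ Ioi t
    · rw [Set.indicator_of_mem h]
      have h2 : (0:ℝ) ≤ s - t := by simp only [mem_Ioi] at h; linarith
      rw [show f t s = (s - t) ^ n * rexp (-s ^ 2) from Set.indicator_of_mem h _]
      exact norm_of_nonneg (by positivity)
    · rw [Set.indicator_of_notMem h,
        show f t s = 0 from Set.indicator_of_notMem h _, norm_zero]
  have hint : Integrable (Function.uncurry f) ((volume.restrict (Ioi x)).prod volume) := by
    rw [integrable_prod_iff hmeas]
    constructor
    · refine Eventually.of_forall fun t => ?_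
      exact (integrable_indicator_iff measurableSet_Ioi).2 (integrableOn_aux n t)
    · have hC : (0:ℝ) ≤ n ! * (∫ s : ℝ, rexp (s - s ^ 2)) := by
        have : (0:ℝ) ≤ ∫ s : ℝ, rexp (s - s ^ 2) :=
          integral_nonneg fun s => (exp_pos _).le
        positivity
      have hbd : Integrable (fun t : ℝ =>
          (n ! * (∫ s : ℝ, rexp (s - s ^ 2))) * rexp (-t)) (volume.restrict (Ioi x)) := by
        have := (exp_neg_integrableOn_Ioi x one_pos).const_mul
          (n ! * (∫ s : ℝ, rexp (s - s ^ 2)))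
        simpa using this
      refine Integrable.mono hbd hmeas.norm.integral_prod_right' ?_
      refine Eventually.of_forall fun t => ?_
      have h0 : (0:ℝ) ≤ ∫ s, ‖f t s‖ := integral_nonneg fun s => norm_nonneg _
      show ‖∫ s, ‖f t s‖‖ ≤ _
      rw [Real.norm_eq_abs, abs_of_nonneg h0, Real.norm_eq_abs, abs_of_nonneg (by positivity)]
      rw [hnorm t]
      exact inner_le n t
  have hswap := integral_integral_swap hint
  have hL : (∫ t in Ioi x, ∫ s, f t s)
      = ∫ t in Ioi x, ∫ s in Ioi t, (s - t) ^ n * rexp (-s ^ 2) := by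
    refine setIntegral_congr_fun measurableSet_Ioi fun t _ => ?_
    simp only [hf]
    exact integral_indicator measurableSet_Ioi
  have hR : (fun s => ∫ t in Ioi x, f t s)
      = Set.indicator (Ioi x) (fun s => (s - x) ^ (n + 1) / (n + 1 : ℝ) * rexp (-s ^ 2)) := by
    ext s
    have hfs : ∀ t, f t s = Set.indicator (Iio s) (fun t => (s - t) ^ n * rexp (-s ^ 2)) t := by
      intro t
      by_cases h : t < s
      · rw [hval t s h, Set.indicator_of_mem (Set.mem_Iio.2 h)]
      · rw [show f t s = 0 from Set.indicator_of_notMem (by simpa using h) _,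
          Set.indicator_of_notMem (by simpa using h)]
    simp_rw [hfs]
    rw [integral_indicator measurableSet_Iio, Measure.restrict_restrict measurableSet_Iio,
      Set.Iio_inter_Ioi]
    by_cases hs : x < s
    · rw [Set.indicator_of_mem (Set.mem_Ioi.2 hs)]
      rw [← integral_Ioc_eq_integral_Ioo, ← intervalIntegral.integral_of_le hs.le]
      have : ∀ t : ℝ, (s - t) ^ n * rexp (-s ^ 2)
          = (fun u => u ^ n * rexp (-s ^ 2)) (s - t) := fun t => rfl
      rw [intervalIntegral.integral_comp_sub_left (fun u => u ^ n * rexp (-s ^ 2)) s]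
      rw [sub_self, intervalIntegral.integral_mul_const, integral_pow]
      simp
    · rw [Set.indicator_of_notMem (by simpa using hs)]
      rw [Set.Ioo_eq_empty (by simpa using hs), Measure.restrict_empty, integral_zero_measure]
  rw [hL] at hswap
  rw [hswap, hR, integral_indicator measurableSet_Ioi]

lemma ierfc_eq (n : ℕ) (x : ℝ) :
    ierfc n x = 2 / Real.sqrt Real.pi / n ! * ∫ t in Ioi x, (t - x) ^ n * rexp (-t ^ 2) := by
  induction n generalizing x with
  | zero => simp [ierfc]
  | succ n ih =>
    have h0 : ierfc (n + 1) x = ∫ t in Ioi x, ierfc n t := rfl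
    rw [h0]
    calc ∫ t in Ioi x, ierfc n t
        = ∫ t in Ioi x, 2 / Real.sqrt Real.pi / n ! *
            ∫ s in Ioi t, (s - t) ^ n * rexp (-s ^ 2) := by
          exact setIntegral_congr_fun measurableSet_Ioi fun t _ => ih t
      _ = 2 / Real.sqrt Real.pi / n ! *
            ∫ t in Ioi x, ∫ s in Ioi t, (s - t) ^ n * rexp (-s ^ 2) := integral_const_mul _ _
      _ = 2 / Real.sqrt Real.pi / n ! *
            ∫ s in Ioi x, (s - x) ^ (n + 1) / (n + 1 : ℝ) * rexp (-s ^ 2) := by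
          rw [swap_lemma]
      _ = 2 / Real.sqrt Real.pi / (n + 1)! *
            ∫ s in Ioi x, (s - x) ^ (n + 1) * rexp (-s ^ 2) := by
          have h : ∀ s : ℝ, (s - x) ^ (n + 1) / (n + 1 : ℝ) * rexp (-s ^ 2)
              = ((n : ℝ) + 1)⁻¹ * ((s - x) ^ (n + 1) * rexp (-s ^ 2)) := fun s => by
            push_cast; ring
          simp_rw [h, integral_const_mul]
          rw [Nat.factorial_succ]
          have hne : ((n:ℝ) + 1) ≠ 0 := by positivity
          have hne2 : ((n ! : ℕ) : ℝ) ≠ 0 := by positivity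
          have hsp : Real.sqrt Real.pi ≠ 0 := by
            exact (Real.sqrt_pos.2 Real.pi_pos).ne'
          push_cast
          field_simp

/-- `ierfc n 0 = 1 / (2^n * Gamma (n/2 + 1))`. -/
theorem ierfc_zero (n : ℕ) :
    ierfc n 0 = 1 / (2 ^ n * Real.Gamma ((n : ℝ) / 2 + 1)) := by
  rw [ierfc_eq]
  have h1 : ∫ t in Ioi (0:ℝ), (t - 0) ^ n * rexp (-t ^ 2)
      = (1 / 2) * Real.Gamma (((n : ℝ) + 1) / 2) := by
    rw [show (1/2 : ℝ) * Real.Gamma (((n : ℝ) + 1) / 2)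
        = (1 / (2:ℝ)) * Real.Gamma (((n:ℝ) + 1) / 2) by norm_num,
      ← integral_rpow_mul_exp_neg_rpow two_pos (lt_of_lt_of_le neg_one_lt_zero (Nat.cast_nonneg n))]
    refine setIntegral_congr_fun measurableSet_Ioi fun t ht => ?_
    rw [sub_zero, ← Real.rpow_natCast t n,
      show ((2:ℝ)) = ((2:ℕ):ℝ) by norm_num, Real.rpow_natCast]
    norm_num
  rw [h1]
  have key : 2 ^ n * (Real.Gamma (((n:ℝ) + 1) / 2) * Real.Gamma ((n:ℝ) / 2 + 1))
      = n ! * Real.sqrt Real.pi := by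
    have h := Real.Gamma_mul_Gamma_add_half (((n:ℝ) + 1) / 2)
    rw [show ((n:ℝ) + 1) / 2 + 1 / 2 = (n:ℝ) / 2 + 1 by ring,
      show 2 * (((n:ℝ) + 1) / 2) = (n:ℝ) + 1 by ring] at h
    rw [h, Real.Gamma_nat_eq_factorial,
      show (1 - ((n:ℝ) + 1)) = -(n:ℝ) by ring,
      Real.rpow_neg two_pos.le, Real.rpow_natCast]
    field_simp
  have hG : 0 < Real.Gamma ((n:ℝ) / 2 + 1) := Real.Gamma_pos_of_pos (by positivity)
  have hG2 : 0 < Real.Gamma (((n:ℝ) + 1) / 2) := Real.Gamma_pos_of_pos (by positivity)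
  have hs : 0 < Real.sqrt Real.pi := Real.sqrt_pos.2 Real.pi_pos
  have hfac : (0:ℝ) < n ! := by positivity
  rw [show (2:ℝ) / Real.sqrt Real.pi / ↑n ! * (1 / 2 * Real.Gamma (((n:ℝ) + 1) / 2))
      = Real.Gamma (((n:ℝ) + 1) / 2) / (Real.sqrt Real.pi * ↑n !) by
    field_simp]
  rw [div_eq_div_iff (by positivity) (by positivity), one_mul]
  linear_combination key
end

section
/- For every natural n, a > 0, and real x, the function u(x,t) = (2a√t)ⁿ · iⁿerfc(x/(2a√t)) defined for t > 0 satisfies the one-dimensional heat equation ∂u/∂t = a² · ∂²u/∂x². -/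
open MeasureTheory Filter Set

lemma ftc_Ioi {g : ℝ → ℝ} (hc : Continuous g) (hi : ∀ b : ℝ, IntegrableOn g (Ioi b)) (x : ℝ) :
    HasDerivAt (fun y => ∫ t in Ioi y, g t) (-g x) x := by
  have key : ∀ y : ℝ, (∫ t in Ioi y, g t) = (∫ t in Ioi 0, g t) - ∫ t in (0:ℝ)..y, g t := by
    have base : ∀ u v : ℝ, u ≤ v → (∫ t in Ioi u, g t) = (∫ t in Ioc u v, g t) + ∫ t in Ioi v, g t := by
      intro u v huv
      rw [← setIntegral_union (Ioc_disjoint_Ioi le_rfl) measurableSet_Ioi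
        ((hi u).mono_set Ioc_subset_Ioi_self) (hi v), Ioc_union_Ioi_eq_Ioi huv]
    intro y
    rcases le_total 0 y with h | h
    · rw [intervalIntegral.integral_of_le h, base 0 y h]; ring
    · rw [intervalIntegral.integral_of_ge h, base y 0 h]; ring
  have h2 : HasDerivAt (fun y => ∫ t in (0:ℝ)..y, g t) (g x) x :=
    intervalIntegral.integral_hasDerivAt_right (hc.intervalIntegrable 0 x)
      (hc.stronglyMeasurableAtFilter _ _) hc.continuousAt
  have h3 := (hasDerivAt_const x (∫ t in Ioi (0:ℝ), g t)).sub h2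
  rw [zero_sub] at h3
  exact h3.congr_of_eventuallyEq (Eventually.of_forall key)


noncomputable def ier : ℕ → ℝ → ℝ
  | 0 => fun x => (2 / Real.sqrt Real.pi) * Real.exp (-x ^ 2)
  | n + 1 => ierfc n

lemma ier_zero (x : ℝ) : ier 0 x = (2 / Real.sqrt Real.pi) * Real.exp (-x ^ 2) := rfl
lemma ier_succ (n : ℕ) : ier (n + 1) = ierfc n := rfl

lemma ier0_cont : Continuous (ier 0) := by
  simpa [ier] using (continuous_const.fun_mul ((continuous_neg.comp (continuous_pow 2)).rexp) :
    Continuous fun x : ℝ => (2 / Real.sqrt Real.pi) * Real.exp (-x ^ 2))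

lemma ier0_integrable : Integrable (ier 0) := by
  have : Integrable fun x : ℝ => Real.exp (-1 * x ^ 2) := integrable_exp_neg_mul_sq one_pos
  simpa [ier] using (this.const_mul (2 / Real.sqrt Real.pi)).congr
    (Eventually.of_forall fun x => by norm_num)

lemma ier0_nonneg (x : ℝ) : 0 ≤ ier 0 x := by
  have h : (0:ℝ) ≤ 2 / Real.sqrt Real.pi := by positivity
  exact mul_nonneg h (Real.exp_pos _).le

lemma ier0_bound (x : ℝ) (hx : 1 ≤ x) : ier 0 x ≤ (2 / Real.sqrt Real.pi) * Real.exp (-x) := by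
  have h : (0:ℝ) ≤ 2 / Real.sqrt Real.pi := by positivity
  refine mul_le_mul_of_nonneg_left (Real.exp_le_exp.2 ?_) h
  nlinarith

lemma ier_succ_integral (n : ℕ) (x : ℝ) : ier (n + 1) x = ∫ t in Ioi x, ier n t := by
  cases n with
  | zero =>
      show ierfc 0 x = _
      rw [ierfc]
      rw [← integral_const_mul]
      rfl
  | succ m => rfl

lemma expbound_integrableOn (b : ℝ) :
    IntegrableOn (fun t : ℝ => (2 / Real.sqrt Real.pi) * Real.exp (-t)) (Ioi b) := by
  have := (exp_neg_integrableOn_Ioi b one_pos).const_mul (2 / Real.sqrt Real.pi)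
  simpa [IntegrableOn] using this

lemma ier_pkg (n : ℕ) : Continuous (ier n) ∧ (∀ x, 0 ≤ ier n x) ∧
    (∀ x, 1 ≤ x → ier n x ≤ (2 / Real.sqrt Real.pi) * Real.exp (-x)) ∧
    (∀ b : ℝ, IntegrableOn (ier n) (Ioi b)) := by
  induction n with
  | zero =>
      exact ⟨ier0_cont, ier0_nonneg, ier0_bound, fun b => ier0_integrable.integrableOn⟩
  | succ n ih =>
      obtain ⟨hc, hnn, hbd, hi⟩ := ih
      have hcont : Continuous (ier (n + 1)) := by
        rw [continuous_iff_continuousAt]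
        intro x
        have := (ftc_Ioi hc hi x).continuousAt
        exact ContinuousAt.congr this (Eventually.of_forall fun y => (ier_succ_integral n y).symm)
      have hnn' : ∀ x, 0 ≤ ier (n + 1) x := by
        intro x
        rw [ier_succ_integral]
        exact setIntegral_nonneg measurableSet_Ioi fun t _ => hnn t
      have hbd' : ∀ x, 1 ≤ x → ier (n + 1) x ≤ (2 / Real.sqrt Real.pi) * Real.exp (-x) := by
        intro x hx
        rw [ier_succ_integral]
        calc (∫ t in Ioi x, ier n t)
            ≤ ∫ t in Ioi x, (2 / Real.sqrt Real.pi) * Real.exp (-t) := by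
              refine setIntegral_mono_on (hi x) (expbound_integrableOn x) measurableSet_Ioi ?_
              intro t ht
              exact hbd t (hx.trans ht.le)
          _ = (2 / Real.sqrt Real.pi) * Real.exp (-x) := by
              rw [integral_const_mul, integral_exp_neg_Ioi]
      have hi' : ∀ b : ℝ, IntegrableOn (ier (n + 1)) (Ioi b) := by
        intro b
        have h1 : IntegrableOn (ier (n + 1)) (Ioc b 1) := hcont.integrableOn_Ioc
        have h2 : IntegrableOn (ier (n + 1)) (Ioi 1) := by
          refine Integrable.mono (expbound_integrableOn 1) hcont.aestronglyMeasurable.restrict ?_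
          rw [ae_restrict_iff' measurableSet_Ioi]
          refine Eventually.of_forall fun t ht => ?_
          rw [Real.norm_eq_abs, Real.norm_eq_abs, abs_of_nonneg (hnn' t),
            abs_of_nonneg (by positivity)]
          exact hbd' t ht.le
        refine (h1.union h2).mono_set ?_
        intro t ht
        rcases le_total t 1 with h | h
        · exact Or.inl ⟨ht, h⟩
        · rcases h.lt_or_eq with h' | h'
          · exact Or.inr h'
          · exact Or.inl ⟨ht, h'.ge⟩
      exact ⟨hcont, hnn', hbd', hi'⟩


noncomputable def ierD : ℕ → ℝ → ℝ
  | 0 => fun x => -(2 * x * ier 0 x)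
  | n + 1 => fun x => -(ier n x)

lemma hasDerivAt_ier (n : ℕ) (x : ℝ) : HasDerivAt (ier n) (ierD n x) x := by
  cases n with
  | zero =>
      have h1 : HasDerivAt (fun x : ℝ => Real.exp (-x ^ 2))
          (Real.exp (-x ^ 2) * -(2 * x ^ 1)) x := ((hasDerivAt_pow 2 x).neg).exp
      have h2 := h1.const_mul (2 / Real.sqrt Real.pi)
      have : HasDerivAt (ier 0)
          (2 / Real.sqrt Real.pi * (Real.exp (-x ^ 2) * -(2 * x ^ 1))) x :=
        h2.congr_of_eventuallyEq (Eventually.of_forall fun y => ier_zero y)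
      convert this using 1
      simp only [ierD]
      rw [ier_zero]; ring
  | succ n =>
      obtain ⟨hc, -, -, hi⟩ := ier_pkg n
      exact (ftc_Ioi hc hi x).congr_of_eventuallyEq
        (Eventually.of_forall fun y => ier_succ_integral n y)

lemma tendsto_ier (n : ℕ) : Tendsto (ier n) atTop (nhds 0) := by
  obtain ⟨-, hnn, hbd, -⟩ := ier_pkg n
  have hb : Tendsto (fun x : ℝ => (2 / Real.sqrt Real.pi) * Real.exp (-x)) atTop (nhds 0) := by
    simpa using (Real.tendsto_exp_neg_atTop_nhds_zero.const_mul (2 / Real.sqrt Real.pi))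
  refine squeeze_zero' (Eventually.of_forall hnn) ?_ hb
  filter_upwards [eventually_ge_atTop (1:ℝ)] with x hx using hbd x hx

lemma tendsto_mul_ier (n : ℕ) : Tendsto (fun x => x * ier n x) atTop (nhds 0) := by
  obtain ⟨-, hnn, hbd, -⟩ := ier_pkg n
  have hb : Tendsto (fun x : ℝ => (2 / Real.sqrt Real.pi) * (x * Real.exp (-x))) atTop (nhds 0) := by
    have h0 : Tendsto (fun x : ℝ => x * Real.exp (-x)) atTop (nhds 0) := by
      simpa using Real.tendsto_pow_mul_exp_neg_atTop_nhds_zero 1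
    simpa using h0.const_mul (2 / Real.sqrt Real.pi)
  refine squeeze_zero' ?_ ?_ hb
  · filter_upwards [eventually_ge_atTop (0:ℝ)] with x hx using mul_nonneg hx (hnn x)
  · filter_upwards [eventually_ge_atTop (1:ℝ)] with x hx
    have := hbd x hx
    have hx0 : (0:ℝ) ≤ x := by linarith
    nlinarith [Real.exp_pos (-x)]

lemma eq_zero_of_deriv_zero {h : ℝ → ℝ} (hd : ∀ x, HasDerivAt h 0 x)
    (hl : Tendsto h atTop (nhds 0)) (x : ℝ) : h x = 0 := by
  have hconst : ∀ y, h y = h x := fun y =>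
    is_const_of_deriv_eq_zero (fun z => (hd z).differentiableAt) (fun z => (hd z).deriv) y x
  have h2 : Tendsto h atTop (nhds (h x)) :=
    Tendsto.congr (fun y => (hconst y).symm) tendsto_const_nhds
  exact tendsto_nhds_unique h2 hl

lemma ier_rec (m : ℕ) (x : ℝ) :
    2 * ((m : ℝ) + 1) * ier (m + 2) x = ier m x - 2 * x * ier (m + 1) x := by
  induction m generalizing x with
  | zero =>
      have hd : ∀ y : ℝ, HasDerivAt
          (fun z => 2 * ier 2 z - ier 0 z + 2 * z * ier 1 z) 0 y := by
        intro y
        have h2 := (hasDerivAt_ier 2 y).const_mul 2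
        have h0 := hasDerivAt_ier 0 y
        have h1 := ((hasDerivAt_id y).const_mul 2).fun_mul (hasDerivAt_ier 1 y)
        have := (h2.fun_sub h0).fun_add h1
        refine this.congr_deriv ?_
        simp [ierD]; ring
      have hl : Tendsto (fun z => 2 * ier 2 z - ier 0 z + 2 * z * ier 1 z) atTop (nhds 0) := by
        have := (((tendsto_ier 2).const_mul 2).sub (tendsto_ier 0)).add
          ((tendsto_mul_ier 1).const_mul 2)
        simpa [mul_assoc] using this
      have := eq_zero_of_deriv_zero hd hl x
      push_cast
      linarith [this]
  | succ m ih =>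
      have hd : ∀ y : ℝ, HasDerivAt
          (fun z => 2 * ((m : ℝ) + 2) * ier (m + 3) z - ier (m + 1) z + 2 * z * ier (m + 2) z)
          0 y := by
        intro y
        have h2 := (hasDerivAt_ier (m + 3) y).const_mul (2 * ((m : ℝ) + 2))
        have h0 := hasDerivAt_ier (m + 1) y
        have h1 := ((hasDerivAt_id y).const_mul 2).fun_mul (hasDerivAt_ier (m + 2) y)
        have := (h2.fun_sub h0).fun_add h1
        refine this.congr_deriv ?_
        simp only [ierD, id_eq]
        have hih := ih y
        push_cast
        linarith [hih]
      have hl : Tendsto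
          (fun z => 2 * ((m : ℝ) + 2) * ier (m + 3) z - ier (m + 1) z + 2 * z * ier (m + 2) z)
          atTop (nhds 0) := by
        have := (((tendsto_ier (m + 3)).const_mul (2 * ((m : ℝ) + 2))).sub
          (tendsto_ier (m + 1))).add ((tendsto_mul_ier (m + 2)).const_mul 2)
        simpa [mul_assoc] using this
      have := eq_zero_of_deriv_zero hd hl x
      push_cast
      push_cast at this
      linarith [this]

lemma ier_key (n : ℕ) (x : ℝ) :
    -(ierD n x) = 2 * (n : ℝ) * ier (n + 1) x + 2 * x * ier n x := by
  cases n with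
  | zero => simp [ierD]
  | succ m =>
      have := ier_rec m x
      simp only [ierD]
      push_cast
      push_cast at this
      linarith [this]

lemma ierD_succ (n : ℕ) (x : ℝ) : ierD (n + 1) x = -(ier n x) := rfl

/-- `u(x,t) = (2a√t)^n * ierfc n (x/(2a√t))` satisfies the heat equation
`∂u/∂t = a² ∂²u/∂x²` for `t > 0`. -/


theorem ierfc_heat_solution (n : ℕ) (a : ℝ) (ha : 0 < a) (x t : ℝ) (ht : 0 < t) :
    deriv (fun s : ℝ =>
        (2 * a * Real.sqrt s) ^ n * ierfc n (x / (2 * a * Real.sqrt s))) t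
      = a ^ 2 *
        deriv (deriv (fun y : ℝ =>
          (2 * a * Real.sqrt t) ^ n * ierfc n (y / (2 * a * Real.sqrt t)))) x := by
  rw [← ier_succ n]
  have hst : 0 < Real.sqrt t := Real.sqrt_pos.2 ht
  have hcs : 2 * a * Real.sqrt t ≠ 0 := by positivity
  -- time derivative
  have hsq : HasDerivAt Real.sqrt (1 / (2 * Real.sqrt t)) t := Real.hasDerivAt_sqrt ht.ne'
  have hA : HasDerivAt (fun s' : ℝ => 2 * a * Real.sqrt s')
      (2 * a * (1 / (2 * Real.sqrt t))) t := hsq.const_mul (2 * a)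
  have hpow : HasDerivAt (fun s' : ℝ => (2 * a * Real.sqrt s') ^ n)
      ((n : ℝ) * (2 * a * Real.sqrt t) ^ (n - 1) * (2 * a * (1 / (2 * Real.sqrt t)))) t :=
    hA.pow n
  have hinner : HasDerivAt (fun s' : ℝ => x / (2 * a * Real.sqrt s'))
      ((0 * (2 * a * Real.sqrt t) - x * (2 * a * (1 / (2 * Real.sqrt t)))) /
        (2 * a * Real.sqrt t) ^ 2) t :=
    (hasDerivAt_const t x).div hA hcs
  have hf : HasDerivAt (ier (n + 1)) (-(ier n (x / (2 * a * Real.sqrt t))))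
      (x / (2 * a * Real.sqrt t)) := by
    have := hasDerivAt_ier (n + 1) (x / (2 * a * Real.sqrt t))
    rwa [ierD_succ] at this
  have hcomp : HasDerivAt (fun s' : ℝ => ier (n + 1) (x / (2 * a * Real.sqrt s')))
      (-(ier n (x / (2 * a * Real.sqrt t))) *
        ((0 * (2 * a * Real.sqrt t) - x * (2 * a * (1 / (2 * Real.sqrt t)))) /
          (2 * a * Real.sqrt t) ^ 2)) t :=
    hf.comp t hinner
  rw [(hpow.fun_mul hcomp).deriv]
  -- first space derivative
  have hG : deriv (fun y : ℝ => (2 * a * Real.sqrt t) ^ n * ier (n + 1) (y / (2 * a * Real.sqrt t)))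
      = fun y : ℝ => (2 * a * Real.sqrt t) ^ n *
          (-(ier n (y / (2 * a * Real.sqrt t))) * (1 / (2 * a * Real.sqrt t))) := by
    funext y
    have hin : HasDerivAt (fun y' : ℝ => y' / (2 * a * Real.sqrt t))
        (1 / (2 * a * Real.sqrt t)) y := by
      simpa using (hasDerivAt_id y).div_const (2 * a * Real.sqrt t)
    have hfy : HasDerivAt (ier (n + 1)) (-(ier n (y / (2 * a * Real.sqrt t))))
        (y / (2 * a * Real.sqrt t)) := by
      have := hasDerivAt_ier (n + 1) (y / (2 * a * Real.sqrt t))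
      rwa [ierD_succ] at this
    have hcy : HasDerivAt (fun y' : ℝ => ier (n + 1) (y' / (2 * a * Real.sqrt t)))
        (-(ier n (y / (2 * a * Real.sqrt t))) * (1 / (2 * a * Real.sqrt t))) y :=
      hfy.comp y hin
    rw [(hcy.const_mul ((2 * a * Real.sqrt t) ^ n)).deriv]
  rw [hG]
  -- second space derivative
  have hin : HasDerivAt (fun y' : ℝ => y' / (2 * a * Real.sqrt t))
      (1 / (2 * a * Real.sqrt t)) x := by
    simpa using (hasDerivAt_id x).div_const (2 * a * Real.sqrt t)
  have hdx : HasDerivAt (fun y : ℝ => ier n (y / (2 * a * Real.sqrt t)))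
      (ierD n (x / (2 * a * Real.sqrt t)) * (1 / (2 * a * Real.sqrt t))) x :=
    (hasDerivAt_ier n (x / (2 * a * Real.sqrt t))).comp x hin
  have h2 : HasDerivAt (fun y : ℝ => (2 * a * Real.sqrt t) ^ n *
        (-(ier n (y / (2 * a * Real.sqrt t))) * (1 / (2 * a * Real.sqrt t))))
      ((2 * a * Real.sqrt t) ^ n *
        (-(ierD n (x / (2 * a * Real.sqrt t)) * (1 / (2 * a * Real.sqrt t))) *
          (1 / (2 * a * Real.sqrt t)))) x :=
    (hdx.neg.mul_const (1 / (2 * a * Real.sqrt t))).const_mul _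
  rw [h2.deriv]
  -- algebra
  rw [show ierD n (x / (2 * a * Real.sqrt t))
      = -(2 * (n : ℝ) * ier (n + 1) (x / (2 * a * Real.sqrt t))
          + 2 * (x / (2 * a * Real.sqrt t)) * ier n (x / (2 * a * Real.sqrt t)))
    from by linarith [ier_key n (x / (2 * a * Real.sqrt t))]]
  generalize hgen : Real.sqrt t = s at hst hcs ⊢
  generalize ier (n + 1) (x / (2 * a * s)) = A
  generalize ier n (x / (2 * a * s)) = B
  rcases n with - | m
  · push_cast
    field_simp
    ring
  · rw [show m + 1 - 1 = m from rfl]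
    push_cast
    field_simp
    ring
end

section
/- For every natural n and all x ≥ 0, iⁿerfc x ≤ (e^{−x²})/(2ⁿ · Γ(n/2 + 1)), i.e. iⁿerfc x ≤ iⁿerfc(0) · e^{−x²}. -/
open MeasureTheory Filter

namespace IerfcAux

open Real Set
open scoped ENNReal

noncomputable def rho (n : ℕ) (x : ℝ) : ℝ := ∫ t in Ioi x, (t - x) ^ n * Real.exp (-t ^ 2)

lemma int_pow_gauss (k : ℕ) : Integrable (fun t : ℝ => t ^ k * Real.exp (-t ^ 2)) := by
  have h := integrable_rpow_mul_exp_neg_mul_sq (b := 1) one_pos (s := (k : ℝ))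
    (neg_one_lt_zero.trans_le (Nat.cast_nonneg k))
  simpa [Real.rpow_natCast, neg_mul, one_mul] using h

lemma int_sub_pow_gauss (n : ℕ) (x : ℝ) :
    Integrable (fun t : ℝ => (t - x) ^ n * Real.exp (-t ^ 2)) := by
  have he : (fun t : ℝ => (t - x) ^ n * Real.exp (-t ^ 2))
      = fun t => ∑ k ∈ Finset.range (n + 1),
        (t ^ k * Real.exp (-t ^ 2)) * ((-x) ^ (n - k) * (n.choose k : ℝ)) := by
    funext t
    rw [sub_eq_add_neg, add_pow, Finset.sum_mul]
    exact Finset.sum_congr rfl fun k _ => by ring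
  rw [he]
  exact integrable_finset_sum _ fun k _ => (int_pow_gauss k).mul_const _

lemma int_shift (n : ℕ) (x : ℝ) :
    Integrable (fun u : ℝ => u ^ n * Real.exp (-(u + x) ^ 2)) := by
  have h := (int_sub_pow_gauss n x).comp_add_right x
  simpa using h

lemma rho_shift (n : ℕ) (x : ℝ) :
    rho n x = ∫ u in Ioi 0, u ^ n * Real.exp (-(u + x) ^ 2) := by
  unfold rho
  rw [← integral_indicator measurableSet_Ioi, ← integral_indicator measurableSet_Ioi,
    ← integral_add_right_eq_self
      (Set.indicator (Ioi x) fun t => (t - x) ^ n * Real.exp (-t ^ 2)) x]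
  congr 1
  funext u
  simp [Set.indicator_apply, lt_add_iff_pos_left]

lemma rho_nonneg (n : ℕ) (x : ℝ) : 0 ≤ rho n x :=
  setIntegral_nonneg measurableSet_Ioi fun t ht =>
    mul_nonneg (pow_nonneg (sub_nonneg.2 (le_of_lt ht)) n) (Real.exp_pos _).le

lemma rho_anti (n : ℕ) : AntitoneOn (rho n) (Ici 0) := by
  intro a ha b hb hab
  rw [rho_shift, rho_shift]
  refine setIntegral_mono_on ((int_shift n b).integrableOn) ((int_shift n a).integrableOn)
    measurableSet_Ioi fun u hu => ?_
  have hu' : (0:ℝ) < u := hu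
  have ha' : (0:ℝ) ≤ a := ha
  have h2 : (u + a) ^ 2 ≤ (u + b) ^ 2 := by nlinarith
  exact mul_le_mul_of_nonneg_left (Real.exp_le_exp.2 (neg_le_neg h2)) (pow_nonneg hu'.le n)

lemma lstep (n : ℕ) (x : ℝ) :
    ∫⁻ s in Ioi x, ENNReal.ofReal (rho n s)
      = ENNReal.ofReal (rho (n + 1) x * ((n : ℝ) + 1)⁻¹) := by
  set F : ℝ × ℝ → ℝ≥0∞ := fun p => ENNReal.ofReal ((p.2 - p.1) ^ n * Real.exp (-p.2 ^ 2)) with hF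
  have hFmeas : Measurable F := by
    apply Measurable.ennreal_ofReal
    fun_prop
  set S : Set (ℝ × ℝ) := {p | x < p.1 ∧ p.1 < p.2} with hSdef
  have hS : MeasurableSet S :=
    (measurableSet_lt measurable_const measurable_fst).inter
      (measurableSet_lt measurable_fst measurable_snd)
  have step1 : ∫⁻ s in Ioi x, ENNReal.ofReal (rho n s)
      = ∫⁻ s, ∫⁻ t, S.indicator F (s, t) := by
    rw [← lintegral_indicator measurableSet_Ioi]
    refine lintegral_congr fun s => ?_
    by_cases hs : x < s
    · rw [Set.indicator_of_mem (Set.mem_Ioi.mpr hs)]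
      have h1 : ENNReal.ofReal (rho n s)
          = ∫⁻ t in Ioi s, ENNReal.ofReal ((t - s) ^ n * Real.exp (-t ^ 2)) := by
        refine ofReal_integral_eq_lintegral_ofReal (int_sub_pow_gauss n s).integrableOn ?_
        filter_upwards [ae_restrict_mem measurableSet_Ioi] with t ht
        exact mul_nonneg (pow_nonneg (sub_nonneg.2 ht.le) n) (Real.exp_pos _).le
      rw [h1, ← lintegral_indicator measurableSet_Ioi]
      refine lintegral_congr fun t => ?_
      by_cases ht : s < t
      · rw [Set.indicator_of_mem (Set.mem_Ioi.mpr ht), Set.indicator_of_mem (show (s,t) ∈ S from ⟨hs, ht⟩)]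
      · rw [Set.indicator_of_notMem (by simpa using ht), Set.indicator_of_notMem (fun h => ht h.2)]
    · rw [Set.indicator_of_notMem (by simpa using hs)]
      have : ∀ t, S.indicator F (s, t) = 0 := fun t =>
        Set.indicator_of_notMem (by simp [hSdef]; tauto) F
      simp [this]
  have step2 : (∫⁻ s, ∫⁻ t, S.indicator F (s, t)) = ∫⁻ t, ∫⁻ s, S.indicator F (s, t) := by
    exact lintegral_lintegral_swap (hFmeas.indicator hS).aemeasurable
  have step3 : (∫⁻ t, ∫⁻ s, S.indicator F (s, t))
      = ∫⁻ t, (Ioi x).indicator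
          (fun t => ENNReal.ofReal ((t - x) ^ (n + 1) * Real.exp (-t ^ 2) * ((n : ℝ) + 1)⁻¹)) t := by
    refine lintegral_congr fun t => ?_
    have hin : ∀ s, S.indicator F (s, t)
        = (Ioo x t).indicator (fun s => ENNReal.ofReal ((t - s) ^ n * Real.exp (-t ^ 2))) s := by
      intro s
      by_cases hst : x < s ∧ s < t
      · rw [Set.indicator_of_mem (show (s,t) ∈ S from hst), Set.indicator_of_mem (Set.mem_Ioo.mpr hst)]
      · rw [Set.indicator_of_notMem (by simpa [hSdef] using hst),
          Set.indicator_of_notMem (by simpa using hst)]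
    simp_rw [hin]
    rw [lintegral_indicator measurableSet_Ioo]
    by_cases hxt : x < t
    · rw [Set.indicator_of_mem (Set.mem_Ioi.mpr hxt)]
      have hc : Continuous (fun s : ℝ => (t - s) ^ n * Real.exp (-t ^ 2)) := by fun_prop
      have hInt : IntegrableOn (fun s : ℝ => (t - s) ^ n * Real.exp (-t ^ 2)) (Ioo x t) :=
        (hc.integrableOn_Icc).mono_set Ioo_subset_Icc_self
      rw [← ofReal_integral_eq_lintegral_ofReal hInt ?nn]
      case nn =>
        filter_upwards [ae_restrict_mem measurableSet_Ioo] with s hs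
        exact mul_nonneg (pow_nonneg (sub_nonneg.2 hs.2.le) n) (Real.exp_pos _).le
      congr 1
      rw [MeasureTheory.integral_mul_const, ← MeasureTheory.integral_Ioc_eq_integral_Ioo,
        ← intervalIntegral.integral_of_le hxt.le, intervalIntegral.integral_comp_sub_left (fun u => u ^ n) t,
        sub_self, integral_pow]
      push_cast
      rw [zero_pow (by omega)]
      ring
    · rw [Set.indicator_of_notMem (by simpa using hxt), Ioo_eq_empty (by simpa using hxt), Measure.restrict_empty,
        lintegral_zero_measure]
  rw [step1, step2, step3, lintegral_indicator measurableSet_Ioi,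
    ← ofReal_integral_eq_lintegral_ofReal (((int_sub_pow_gauss (n+1) x).mul_const _).integrableOn) ?nn2]
  case nn2 =>
    filter_upwards [ae_restrict_mem measurableSet_Ioi] with t ht
    have : (0:ℝ) ≤ (t - x) ^ (n+1) := pow_nonneg (sub_nonneg.2 ht.le) _
    positivity
  rw [MeasureTheory.integral_mul_const]
  rfl

lemma ierfc_rep (n : ℕ) : ∀ x : ℝ, 0 ≤ x →
    ierfc n x = 2 / Real.sqrt Real.pi / (n.factorial : ℝ) * rho n x := by
  induction n with
  | zero =>
    intro x hx
    simp only [ierfc, rho, pow_zero, one_mul, Nat.factorial_zero, Nat.cast_one, div_one]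
  | succ n ih =>
    intro x hx
    have hsub : Ioi x ⊆ Ici (0:ℝ) := fun s hs => le_of_lt (lt_of_le_of_lt hx hs)
    have hmble : AEStronglyMeasurable (rho n) (volume.restrict (Ioi x)) :=
      (aemeasurable_restrict_of_antitoneOn measurableSet_Ioi
        ((rho_anti n).mono hsub)).aestronglyMeasurable
    have h1 : ierfc (n + 1) x
        = ∫ s in Ioi x, 2 / Real.sqrt Real.pi / (n.factorial : ℝ) * rho n s := by
      show (∫ s in Ioi x, ierfc n s) = _
      exact setIntegral_congr_fun measurableSet_Ioi fun s hs => ih s (hx.trans (le_of_lt hs))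
    have h2 : ∫ s in Ioi x, rho n s = rho (n + 1) x * ((n : ℝ) + 1)⁻¹ := by
      rw [integral_eq_lintegral_of_nonneg_ae (Eventually.of_forall fun s => rho_nonneg n s) hmble,
        lstep n x, ENNReal.toReal_ofReal (mul_nonneg (rho_nonneg _ _) (by positivity))]
    rw [h1, integral_const_mul, h2, Nat.factorial_succ]
    push_cast
    rw [mul_comm ((n : ℝ) + 1) (n.factorial : ℝ), ← div_div,
      div_eq_mul_inv (2 / Real.sqrt Real.pi / (n.factorial : ℝ))]
    ring

lemma rho_zero (n : ℕ) : rho n 0 = Real.Gamma (((n : ℝ) + 1) / 2) / 2 := by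
  have hq : (-1 : ℝ) < (n : ℝ) := neg_one_lt_zero.trans_le (Nat.cast_nonneg n)
  have key := integral_rpow_mul_exp_neg_rpow (p := 2) (q := (n : ℝ)) two_pos hq
  have he : ∫ t in Ioi (0:ℝ), t ^ ((n:ℝ)) * Real.exp (-t ^ (2:ℝ))
      = ∫ t in Ioi (0:ℝ), t ^ n * Real.exp (-t ^ 2) := by
    refine setIntegral_congr_fun measurableSet_Ioi fun t ht => ?_
    rw [Real.rpow_natCast, show (2:ℝ) = ((2:ℕ):ℝ) by norm_num, Real.rpow_natCast]
  rw [he] at key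
  unfold rho
  simp only [sub_zero]
  rw [key]
  ring

lemma const_id (n : ℕ) :
    2 / Real.sqrt Real.pi / (n.factorial : ℝ) * (Real.Gamma (((n : ℝ) + 1) / 2) / 2)
      = 1 / (2 ^ n * Real.Gamma ((n : ℝ) / 2 + 1)) := by
  have hdup := Real.Gamma_mul_Gamma_add_half (((n : ℝ) + 1) / 2)
  rw [show ((n : ℝ) + 1) / 2 + 1 / 2 = (n : ℝ) / 2 + 1 by ring,
    show 2 * (((n : ℝ) + 1) / 2) = ((n : ℕ) : ℝ) + 1 by push_cast; ring,
    Real.Gamma_nat_eq_factorial,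
    show (1 : ℝ) - ((n : ℝ) + 1) = -(n : ℝ) by ring,
    Real.rpow_neg (by norm_num), Real.rpow_natCast] at hdup
  have hπ : (0:ℝ) < Real.sqrt Real.pi := Real.sqrt_pos.2 Real.pi_pos
  have hfac : (0:ℝ) < (n.factorial : ℝ) := by exact_mod_cast n.factorial_pos
  have hΓ : (0:ℝ) < Real.Gamma ((n : ℝ) / 2 + 1) :=
    Real.Gamma_pos_of_pos (by positivity)
  have h2n : (0:ℝ) < (2:ℝ) ^ n := by positivity
  set A := Real.Gamma (((n : ℝ) + 1) / 2) with hA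
  set B := Real.Gamma ((n : ℝ) / 2 + 1) with hB
  have hdup' : A * B * 2 ^ n = (n.factorial : ℝ) * Real.sqrt Real.pi := by
    rw [hdup]
    field_simp
  field_simp
  linear_combination hdup'

theorem bound_aux (n : ℕ) (x : ℝ) (hx : 0 ≤ x) :
    ierfc n x ≤ Real.exp (-x ^ 2) / (2 ^ n * Real.Gamma ((n : ℝ) / 2 + 1)) := by
  have hc : (0:ℝ) ≤ 2 / Real.sqrt Real.pi / (n.factorial : ℝ) := by positivity
  have hbound : rho n x ≤ rho n 0 * Real.exp (-x ^ 2) := by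
    rw [rho_shift n x, rho_shift n 0]
    calc ∫ u in Ioi (0:ℝ), u ^ n * Real.exp (-(u + x) ^ 2)
        ≤ ∫ u in Ioi (0:ℝ), (u ^ n * Real.exp (-(u + 0) ^ 2)) * Real.exp (-x ^ 2) := by
          refine setIntegral_mono_on ((int_shift n x).integrableOn)
            (((int_shift n 0).mul_const _).integrableOn) measurableSet_Ioi fun u hu => ?_
          have hu' : (0:ℝ) < u := hu
          have h0 : Real.exp (-(u + x) ^ 2) ≤ Real.exp (-(u + 0) ^ 2) * Real.exp (-x ^ 2) := by
            rw [← Real.exp_add]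
            apply Real.exp_le_exp.2
            nlinarith [mul_nonneg hu'.le hx]
          calc u ^ n * Real.exp (-(u + x) ^ 2)
              ≤ u ^ n * (Real.exp (-(u + 0) ^ 2) * Real.exp (-x ^ 2)) :=
                mul_le_mul_of_nonneg_left h0 (pow_nonneg hu'.le n)
            _ = (u ^ n * Real.exp (-(u + 0) ^ 2)) * Real.exp (-x ^ 2) := by ring
      _ = (∫ u in Ioi (0:ℝ), u ^ n * Real.exp (-(u + 0) ^ 2)) * Real.exp (-x ^ 2) :=
          MeasureTheory.integral_mul_const _ _
  rw [ierfc_rep n x hx]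
  calc 2 / Real.sqrt Real.pi / (n.factorial : ℝ) * rho n x
      ≤ 2 / Real.sqrt Real.pi / (n.factorial : ℝ) * (rho n 0 * Real.exp (-x ^ 2)) :=
        mul_le_mul_of_nonneg_left hbound hc
    _ = (2 / Real.sqrt Real.pi / (n.factorial : ℝ) * rho n 0) * Real.exp (-x ^ 2) := by ring
    _ = Real.exp (-x ^ 2) / (2 ^ n * Real.Gamma ((n : ℝ) / 2 + 1)) := by
        rw [rho_zero, const_id]
        ring

end IerfcAux

/-- For `x ≥ 0`, `ierfc n x ≤ exp (-x²) / (2^n * Gamma (n/2 + 1)) = ierfc n 0 * exp (-x²)`. -/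
theorem ierfc_gaussian_bound (n : ℕ) (x : ℝ) (hx : 0 ≤ x) :
    ierfc n x ≤ Real.exp (-x ^ 2) / (2 ^ n * Real.Gamma ((n : ℝ) / 2 + 1)) :=
  IerfcAux.bound_aux n x hx
end
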